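/- Let x ∈ ℝ^n with |x| = 1, let m ≥ 0, let λ ∈ ℝ with λ² ≤ m², and let f : ℝ → ℂ^N be continuously differentiable on [−1, 1], satisfy the boundary conditions −i α_{n+1} Γ(x) f(1) = f(1) and −i α_{n+1} Γ(x) f(−1) = −f(−1), and satisfy the equation −i Γ(x) f'(t) + m α_{n+1} f(t) = λ f(t) for all t ∈ [−1, 1]. Then f(t) = 0 for all t ∈ [−1, 1]. -/

import Mathlib

open Matrix

lemma aux_dot_re (N : ℕ) (u : Fin N → ℂ) :
    (star u ⬝ᵥ u).re = ∑ k, Complex.normSq (u k) := by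
  simp only [dotProduct, Pi.star_apply, ← Complex.normSq_eq_conj_mul_self]
  rw [Complex.re_sum]
  simp [Complex.normSq_apply]

lemma aux_dot_re_nonneg (N : ℕ) (u : Fin N → ℂ) : 0 ≤ (star u ⬝ᵥ u).re := by
  rw [aux_dot_re]
  exact Finset.sum_nonneg fun k _ => Complex.normSq_nonneg _

lemma aux_dot_re_eq_zero (N : ℕ) (u : Fin N → ℂ) (h : (star u ⬝ᵥ u).re = 0) : u = 0 := by
  rw [aux_dot_re] at h
  funext k
  have := (Finset.sum_eq_zero_iff_of_nonneg (fun k _ => Complex.normSq_nonneg (u k))).mp h k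
    (Finset.mem_univ k)
  simpa using Complex.normSq_eq_zero.mp this

/-- The transverse Dirac operator with infinite mass boundary conditions has no spectrum
in `[−m, m]`: if `λ² ≤ m²` and `f` is a `C¹` solution of
`−i Γ(x) f' + m α_{n+1} f = λ f` on `[−1,1]` satisfying the boundary conditions,
then `f ≡ 0` on `[−1,1]`. -/
theorem transverse_dirac_no_small_eigenvalues (n N : ℕ)
    (α : Fin (n + 1) → Matrix (Fin N) (Fin N) ℂ)
    (hHerm : ∀ j, (α j).IsHermitian)
    (hAnti : ∀ j k, α j * α k + α k * α j = (if j = k then (2 : ℂ) else 0) • 1)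
    (x : Fin n → ℝ) (hx : ∑ j, x j ^ 2 = 1)
    (m : ℝ) (hm : 0 ≤ m)
    (lam : ℝ) (hlam : lam ^ 2 ≤ m ^ 2)
    (f f' : ℝ → Fin N → ℂ)
    (hf : ∀ t ∈ Set.Icc (-1 : ℝ) 1, HasDerivWithinAt f (f' t) (Set.Icc (-1 : ℝ) 1) t)
    (hf' : ContinuousOn f' (Set.Icc (-1 : ℝ) 1))
    (hbc1 : ((-Complex.I) • (α (Fin.last n) *
        ∑ j : Fin n, (x j : ℂ) • α j.castSucc)).mulVec (f 1) = f 1)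
    (hbc2 : ((-Complex.I) • (α (Fin.last n) *
        ∑ j : Fin n, (x j : ℂ) • α j.castSucc)).mulVec (f (-1)) = -f (-1))
    (heq : ∀ t ∈ Set.Icc (-1 : ℝ) 1,
      (-Complex.I) • (∑ j : Fin n, (x j : ℂ) • α j.castSucc).mulVec (f' t)
        + (m : ℂ) • (α (Fin.last n)).mulVec (f t) = (lam : ℂ) • f t) :
    ∀ t ∈ Set.Icc (-1 : ℝ) 1, f t = 0 := by
  set s : Set ℝ := Set.Icc (-1 : ℝ) 1 with hs
  set a : Matrix (Fin N) (Fin N) ℂ := α (Fin.last n) with ha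
  set G : Matrix (Fin N) (Fin N) ℂ := ∑ j : Fin n, (x j : ℂ) • α j.castSucc with hGdef
  set B : Matrix (Fin N) (Fin N) ℂ := (-Complex.I) • (a * G) with hBdef
  -- basic Clifford algebra
  have haa : a * a = 1 := by
    have h : a * a + a * a = (2:ℂ) • (1 : Matrix (Fin N) (Fin N) ℂ) := by
      simpa [ha] using hAnti (Fin.last n) (Fin.last n)
    have h2 : (2:ℂ) • (a * a) = (2:ℂ) • (1 : Matrix (Fin N) (Fin N) ℂ) := by
      rw [two_smul]; exact h
    exact smul_right_injective _ two_ne_zero h2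
  have haG : a * G + G * a = 0 := by
    rw [hGdef, Finset.mul_sum, Finset.sum_mul, ← Finset.sum_add_distrib]
    refine Finset.sum_eq_zero fun j _ => ?_
    rw [mul_smul_comm, smul_mul_assoc, ← smul_add, ha]
    have h := hAnti (Fin.last n) j.castSucc
    rw [if_neg (Fin.castSucc_lt_last j).ne'] at h
    rw [h]
    simp
  have hGG : G * G = 1 := by
    have e1 : G * G = ∑ j : Fin n, ∑ k : Fin n,
        ((x j : ℂ) * (x k : ℂ)) • (α j.castSucc * α k.castSucc) := by
      rw [hGdef, Finset.sum_mul_sum]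
      exact Finset.sum_congr rfl fun j _ => Finset.sum_congr rfl fun k _ =>
        smul_mul_smul_comm _ _ _ _
    have e2 : G * G = ∑ j : Fin n, ∑ k : Fin n,
        ((x j : ℂ) * (x k : ℂ)) • (α k.castSucc * α j.castSucc) := by
      rw [e1, Finset.sum_comm]
      exact Finset.sum_congr rfl fun j _ => Finset.sum_congr rfl fun k _ => by
        rw [mul_comm ((x j : ℂ))]
    have key : G * G + G * G = (2:ℂ) • (1 : Matrix (Fin N) (Fin N) ℂ) := by
      nth_rewrite 1 [e1]
      nth_rewrite 1 [e2]
      rw [← Finset.sum_add_distrib]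
      simp_rw [← Finset.sum_add_distrib, ← smul_add, hAnti, Fin.castSucc_inj]
      have : ∀ j : Fin n, ∑ k : Fin n, ((x j : ℂ) * (x k : ℂ)) •
          ((if j = k then (2:ℂ) else 0) • (1 : Matrix (Fin N) (Fin N) ℂ))
          = ((x j : ℂ) * (x j : ℂ)) • ((2:ℂ) • (1 : Matrix (Fin N) (Fin N) ℂ)) := by
        intro j
        rw [Finset.sum_eq_single j]
        · rw [if_pos rfl]
        · intro k _ hk
          rw [if_neg (Ne.symm hk)]
          simp
        · simp
      rw [Finset.sum_congr rfl fun j _ => this j, ← Finset.sum_smul]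
      have hsum : (∑ j : Fin n, (x j : ℂ) * (x j : ℂ)) = 1 := by
        have : (∑ j : Fin n, (x j : ℂ) * (x j : ℂ)) = ((∑ j, x j ^ 2 : ℝ) : ℂ) := by
          push_cast
          exact Finset.sum_congr rfl fun j _ => (sq _).symm
        rw [this, hx, Complex.ofReal_one]
      rw [hsum, one_smul]
    have h2 : (2:ℂ) • (G * G) = (2:ℂ) • (1 : Matrix (Fin N) (Fin N) ℂ) := by
      rw [two_smul]; exact key
    exact smul_right_injective _ two_ne_zero h2
  have haH : aᴴ = a := (hHerm _).eq
  have hGH : Gᴴ = G := by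
    rw [hGdef, conjTranspose_sum]
    refine Finset.sum_congr rfl fun j _ => ?_
    rw [conjTranspose_smul, (hHerm _).eq]
    simp
  -- the coefficient matrix of the ODE
  set L : Matrix (Fin N) (Fin N) ℂ := (lam : ℂ) • 1 - (m : ℂ) • a with hLdef
  set A : Matrix (Fin N) (Fin N) ℂ := Complex.I • (G * L) with hAdef
  have hkey : Aᴴ * B + B * A = ((2*lam : ℝ) : ℂ) • a - ((2*m : ℝ) : ℂ) • 1 := by
    have hLH : Lᴴ = L := by
      rw [hLdef]
      simp [conjTranspose_sub, conjTranspose_smul, haH, Complex.star_def, Complex.conj_ofReal]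
    have hGaG : (G * a) * G = -a := by
      have h1 : G * a = -(a * G) := eq_neg_of_add_eq_zero_right haG
      rw [h1, neg_mul, mul_assoc, hGG, mul_one]
    have hAH : Aᴴ = (-Complex.I) • (L * G) := by
      rw [hAdef, conjTranspose_smul, conjTranspose_mul, hLH, hGH]
      simp [Complex.star_def]
    rw [hAH, hBdef, hAdef, smul_mul_smul_comm, smul_mul_smul_comm]
    have c1 : (-Complex.I) * (-Complex.I) = -1 := by simp [Complex.I_mul_I]
    have c2 : (-Complex.I) * Complex.I = 1 := by simp [Complex.I_mul_I]
    rw [c1, c2, one_smul]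
    have e1 : (L * G) * (a * G) = -(L * a) := by
      rw [mul_assoc L G, ← mul_assoc G a, hGaG, mul_neg]
    have e2 : (a * G) * (G * L) = a * L := by
      rw [mul_assoc a G, ← mul_assoc G G, hGG, one_mul]
    rw [e1, e2]
    have e3 : L * a = (lam:ℂ) • a - (m:ℂ) • 1 := by
      rw [hLdef, sub_mul, smul_mul_assoc, one_mul, smul_mul_assoc, haa]
    have e4 : a * L = (lam:ℂ) • a - (m:ℂ) • 1 := by
      rw [hLdef, mul_sub, mul_smul_comm, mul_one, mul_smul_comm, haa]
    rw [e3, e4]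
    push_cast
    module
  have hLmul : ∀ u : Fin N → ℂ, L *ᵥ u = (lam:ℂ) • u - (m:ℂ) • (a *ᵥ u) := by
    intro u
    rw [hLdef, sub_mulVec, smul_mulVec, one_mulVec, smul_mulVec]
  -- the first-order form of the equation
  have hode : ∀ t ∈ s, f' t = A *ᵥ (f t) := by
    intro t ht
    have h := heq t ht
    have h1 : (-Complex.I) • (G *ᵥ f' t) = L *ᵥ f t := by
      rw [hLmul, eq_sub_iff_add_eq]; exact h
    have h2 : G *ᵥ ((-Complex.I) • (G *ᵥ f' t)) = G *ᵥ (L *ᵥ f t) := by rw [h1]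
    rw [mulVec_smul, mulVec_mulVec, hGG, one_mulVec, mulVec_mulVec] at h2
    have h3 := congrArg (fun w => Complex.I • w) h2
    rw [smul_smul, mul_neg, Complex.I_mul_I, neg_neg, one_smul] at h3
    rw [h3, hAdef, smul_mulVec]
  -- the "boundary form" g and its derivative
  have hg : ∀ t ∈ s, HasDerivWithinAt (fun t => star (f t) ⬝ᵥ (B *ᵥ f t))
      (star (f' t) ⬝ᵥ (B *ᵥ f t) + star (f t) ⬝ᵥ (B *ᵥ f' t)) s t := by
    intro t ht
    have hcomp : ∀ k, HasDerivWithinAt (fun t => f t k) (f' t k) s t := fun k =>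
      hasDerivWithinAt_pi.mp (hf t ht) k
    have hterm : ∀ k : Fin N, HasDerivWithinAt (fun t => star (f t k) * (B *ᵥ f t) k)
        (star (f' t k) * (B *ᵥ f t) k + star (f t k) * (B *ᵥ f' t) k) s t := by
      intro k
      have hBk : HasDerivWithinAt (fun t => (B *ᵥ f t) k) ((B *ᵥ f' t) k) s t := by
        simp only [Matrix.mulVec, dotProduct]
        exact HasDerivWithinAt.fun_sum fun l _ => (hcomp l).const_mul (B k l)
      exact ((hcomp k).star).mul hBk
    have h := HasDerivWithinAt.fun_sum (fun k (_ : k ∈ Finset.univ) => hterm k)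
    simpa only [dotProduct, Pi.star_apply, Finset.sum_add_distrib] using h
  have hh : ∀ t ∈ s, HasDerivWithinAt (fun t => (star (f t) ⬝ᵥ (B *ᵥ f t)).re)
      ((star (f' t) ⬝ᵥ (B *ᵥ f t) + star (f t) ⬝ᵥ (B *ᵥ f' t)).re) s t := by
    intro t ht
    exact (Complex.reCLM.hasFDerivAt.comp_hasDerivWithinAt t (hg t ht))
  -- the value of the derivative
  have hgd : ∀ t ∈ s, star (f' t) ⬝ᵥ (B *ᵥ f t) + star (f t) ⬝ᵥ (B *ᵥ f' t) =
      ((2*lam : ℝ) : ℂ) * (star (f t) ⬝ᵥ (a *ᵥ f t)) - ((2*m : ℝ) : ℂ) * (star (f t) ⬝ᵥ f t) := by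
    intro t ht
    rw [hode t ht, star_mulVec, ← dotProduct_mulVec, mulVec_mulVec, mulVec_mulVec,
      ← dotProduct_add, ← add_mulVec, hkey, sub_mulVec, smul_mulVec, smul_mulVec,
      one_mulVec, dotProduct_sub, dotProduct_smul, dotProduct_smul, smul_eq_mul, smul_eq_mul]
  -- the quadratic estimate
  have hwre : ∀ u : Fin N → ℂ,
      star ((m:ℂ) • u - (lam:ℂ) • (a *ᵥ u)) ⬝ᵥ ((m:ℂ) • u - (lam:ℂ) • (a *ᵥ u)) =
      ((m^2 + lam^2 : ℝ) : ℂ) * (star u ⬝ᵥ u) - ((2*m*lam : ℝ) : ℂ) * (star u ⬝ᵥ (a *ᵥ u)) := by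
    intro u
    have hs1 : star (a *ᵥ u) ⬝ᵥ u = star u ⬝ᵥ (a *ᵥ u) := by
      rw [star_mulVec, haH, ← dotProduct_mulVec]
    have hs2 : star (a *ᵥ u) ⬝ᵥ (a *ᵥ u) = star u ⬝ᵥ u := by
      rw [star_mulVec, haH, ← dotProduct_mulVec, mulVec_mulVec, haa, one_mulVec]
    simp only [star_sub, star_smul, Complex.star_def, Complex.conj_ofReal, sub_dotProduct,
      dotProduct_sub, smul_dotProduct, dotProduct_smul, smul_eq_mul, hs1, hs2]
    push_cast
    ring
  -- nonpositivity of the derivative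
  have hgdle : ∀ t ∈ s, ((star (f' t) ⬝ᵥ (B *ᵥ f t) + star (f t) ⬝ᵥ (B *ᵥ f' t)).re) ≤ 0 := by
    intro t ht
    rw [hgd t ht]
    set E : ℝ := (star (f t) ⬝ᵥ f t).re with hE
    set r : ℝ := (star (f t) ⬝ᵥ (a *ᵥ f t)).re with hr
    have hre : ((((2*lam : ℝ) : ℂ)) * (star (f t) ⬝ᵥ (a *ᵥ f t))
        - (((2*m : ℝ) : ℂ)) * (star (f t) ⬝ᵥ f t)).re = 2*lam*r - 2*m*E := by
      rw [Complex.sub_re, Complex.re_ofReal_mul, Complex.re_ofReal_mul]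
    rw [hre]
    have hwnn := aux_dot_re_nonneg N ((m:ℂ) • f t - (lam:ℂ) • (a *ᵥ f t))
    rw [hwre (f t)] at hwnn
    rw [Complex.sub_re, Complex.re_ofReal_mul, Complex.re_ofReal_mul] at hwnn
    have hEnn : 0 ≤ E := aux_dot_re_nonneg N (f t)
    rcases eq_or_lt_of_le hm with hm0 | hm0
    · have hl0 : lam = 0 := by nlinarith [sq_nonneg lam]
      rw [hl0, ← hm0]
      ring_nf
      simp
    · have h1 : 2*m*lam*r ≤ (m^2+lam^2)*E := by linarith
      have h2 : (m^2+lam^2)*E ≤ 2*m^2*E := by nlinarith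
      have h3 : m * (2*lam*r) ≤ m * (2*m*E) := by nlinarith
      have := (mul_le_mul_iff_right₀ hm0).mp h3
      linarith
  -- monotonicity
  have hmono : AntitoneOn (fun t => (star (f t) ⬝ᵥ (B *ᵥ f t)).re) s := by
    apply antitoneOn_of_hasDerivWithinAt_nonpos (convex_Icc _ _)
      (f' := fun t => ((star (f' t) ⬝ᵥ (B *ᵥ f t) + star (f t) ⬝ᵥ (B *ᵥ f' t)).re))
    · exact fun t ht => (hh t ht).continuousWithinAt
    · intro t ht
      exact ((hh t (interior_subset ht)).mono interior_subset)
    · intro t ht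
      exact hgdle t (interior_subset ht)
  have hmem1 : (1:ℝ) ∈ s := by rw [hs]; constructor <;> norm_num
  have hmemm1 : (-1:ℝ) ∈ s := by rw [hs]; constructor <;> norm_num
  have hle : (star (f 1) ⬝ᵥ (B *ᵥ f 1)).re ≤ (star (f (-1)) ⬝ᵥ (B *ᵥ f (-1))).re :=
    hmono hmemm1 hmem1 (by norm_num)
  have hg1 : (star (f 1) ⬝ᵥ (B *ᵥ f 1)).re = (star (f 1) ⬝ᵥ f 1).re := by rw [hbc1]
  have hgm1 : (star (f (-1)) ⬝ᵥ (B *ᵥ f (-1))).re = -(star (f (-1)) ⬝ᵥ f (-1)).re := by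
    rw [hbc2, dotProduct_neg, Complex.neg_re]
  have hE1 := aux_dot_re_nonneg N (f 1)
  have hEm1 := aux_dot_re_nonneg N (f (-1))
  have hf1 : f 1 = 0 := aux_dot_re_eq_zero _ _ (by rw [hg1, hgm1] at hle; linarith)
  have hfm1 : f (-1) = 0 := aux_dot_re_eq_zero _ _ (by rw [hg1, hgm1] at hle; linarith)
  -- g vanishes identically
  have hzero : ∀ t ∈ s, (star (f t) ⬝ᵥ (B *ᵥ f t)).re = 0 := by
    intro t ht
    have h1 := hmono ht hmem1 ht.2
    have h2 := hmono hmemm1 ht ht.1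
    simp only [hg1, hgm1] at h1 h2
    rw [hf1] at h1
    rw [hfm1] at h2
    simp only [star_zero, zero_dotProduct, Complex.zero_re, neg_zero] at h1 h2
    linarith
  -- the derivative of f vanishes in the interior
  have hf'0 : ∀ t ∈ Set.Ioo (-1:ℝ) 1, f' t = 0 := by
    intro t ht
    have hts : t ∈ s := Set.Ioo_subset_Icc_self ht
    have hnhds : s ∈ nhds t := by rw [hs]; exact Icc_mem_nhds ht.1 ht.2
    have hd1 : HasDerivAt (fun t => (star (f t) ⬝ᵥ (B *ᵥ f t)).re)
        ((star (f' t) ⬝ᵥ (B *ᵥ f t) + star (f t) ⬝ᵥ (B *ᵥ f' t)).re) t :=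
      (hh t hts).hasDerivAt hnhds
    have hev : (fun t => (star (f t) ⬝ᵥ (B *ᵥ f t)).re) =ᶠ[nhds t] fun _ => (0:ℝ) := by
      filter_upwards [hnhds] with y hy using hzero y hy
    have hd2 : HasDerivAt (fun t => (star (f t) ⬝ᵥ (B *ᵥ f t)).re) 0 t :=
      (hasDerivAt_const t (0:ℝ)).congr_of_eventuallyEq hev
    have h0 : (star (f' t) ⬝ᵥ (B *ᵥ f t) + star (f t) ⬝ᵥ (B *ᵥ f' t)).re = 0 :=
      hd1.unique hd2
    rw [hgd t hts, Complex.sub_re, Complex.re_ofReal_mul, Complex.re_ofReal_mul] at h0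
    set E : ℝ := (star (f t) ⬝ᵥ f t).re with hE
    set r : ℝ := (star (f t) ⬝ᵥ (a *ᵥ f t)).re with hr
    have hEnn : 0 ≤ E := aux_dot_re_nonneg N (f t)
    have hwnn := aux_dot_re_nonneg N ((m:ℂ) • f t - (lam:ℂ) • (a *ᵥ f t))
    have hwre' : (star ((m:ℂ) • f t - (lam:ℂ) • (a *ᵥ f t)) ⬝ᵥ
        ((m:ℂ) • f t - (lam:ℂ) • (a *ᵥ f t))).re = (m^2+lam^2)*E - 2*m*lam*r := by
      rw [hwre (f t), Complex.sub_re, Complex.re_ofReal_mul, Complex.re_ofReal_mul]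
    have hw0 : (star ((m:ℂ) • f t - (lam:ℂ) • (a *ᵥ f t)) ⬝ᵥ
        ((m:ℂ) • f t - (lam:ℂ) • (a *ᵥ f t))).re = 0 := by
      rw [hwre']
      nlinarith
    have hwz : (m:ℂ) • f t - (lam:ℂ) • (a *ᵥ f t) = 0 := aux_dot_re_eq_zero _ _ hw0
    have h1 : (m:ℂ) • f t = (lam:ℂ) • (a *ᵥ f t) := by rwa [sub_eq_zero] at hwz
    have hau : (m:ℂ) • (a *ᵥ f t) = (lam:ℂ) • f t := by
      have h2 := congrArg (fun v => a *ᵥ v) h1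
      simpa [mulVec_smul, mulVec_mulVec, haa, one_mulVec] using h2
    have hL0 : L *ᵥ f t = 0 := by
      rw [hLmul, hau, sub_self]
    rw [hode t hts, hAdef, smul_mulVec, ← mulVec_mulVec, hL0, mulVec_zero, smul_zero]
  -- conclusion
  intro t ht
  rcases eq_or_lt_of_le ht.1 with h | h
  · rw [← h]; exact hfm1
  · have hsub : Set.Icc t 1 ⊆ s := by rw [hs]; exact Set.Icc_subset_Icc ht.1 le_rfl
    have hcont : ContinuousOn f (Set.Icc t 1) :=
      fun y hy => ((hf y (hsub hy)).continuousWithinAt).mono hsub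
    have hder : ∀ y ∈ Set.Ico t 1, HasDerivWithinAt f 0 (Set.Ici y) y := by
      intro y hy
      have hyo : y ∈ Set.Ioo (-1:ℝ) 1 := ⟨lt_of_lt_of_le h hy.1, hy.2⟩
      have hd := (hf y (Set.Ioo_subset_Icc_self hyo)).hasDerivAt
        (by rw [hs]; exact Icc_mem_nhds hyo.1 hyo.2)
      rw [hf'0 y hyo] at hd
      exact hd.hasDerivWithinAt
    have hconst := constant_of_has_deriv_right_zero hcont hder 1 (Set.right_mem_Icc.mpr ht.2)
    rw [← hconst, hf1]
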